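/- Let n ≥ 1 and let 0 = t₀ < t₁ < ⋯ < t_{2n} be real numbers. Define μ(t) = 8 · Σ_{k=0}^∞ (1/((2k+1)²π²)) · (1 − e^{−(2k+1)²π² t} · Σ_{j=0}^{2n} (−1)^j e^{(2k+1)²π² t_j}) for t ≥ t_{2n}. Then μ is strictly monotone increasing on [t_{2n}, ∞), μ(t) → 1 as t → ∞, and consequently for every M with μ(t_{2n}) < M < 1 there exists a unique t_{2n+1} > t_{2n} with μ(t_{2n+1}) = M. -/

import Mathlib

lemma hasSum_odd_sq : HasSum (fun k : ℕ => (1:ℝ) / (2*(k:ℝ)+1)^2) (Real.pi^2/8) := by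
  have hfull : HasSum (fun n : ℕ => (1:ℝ) / (n:ℝ)^2) (Real.pi^2/6) := hasSum_zeta_two
  have heven : HasSum (fun k : ℕ => (1:ℝ) / ((2*k : ℕ):ℝ)^2) (Real.pi^2/24) := by
    have h := hfull.mul_left (1/4)
    have hfe : (fun k : ℕ => (1:ℝ) / ((2*k : ℕ):ℝ)^2)
        = (fun k : ℕ => (1/4 : ℝ) * (1 / (k:ℝ)^2)) := by
      funext k
      rcases Nat.eq_zero_or_pos k with hk|hk
      · simp [hk]
      · have : (k:ℝ) ≠ 0 := Nat.cast_ne_zero.2 hk.ne'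
        push_cast
        field_simp
        ring
    rw [hfe]
    convert h using 1
    · rfl
    ring
  have hodds : Summable (fun k : ℕ => (1:ℝ) / ((2*k+1 : ℕ):ℝ)^2) := by
    have hinj : Function.Injective (fun k : ℕ => 2*k+1) := fun a b h => by simp only [] at h; omega
    exact hfull.summable.comp_injective hinj
  obtain ⟨L, hL⟩ := hodds
  have hsum : HasSum (fun n : ℕ => (1:ℝ) / (n:ℝ)^2) (Real.pi^2/24 + L) :=
    HasSum.even_add_odd (f := fun n : ℕ => (1:ℝ)/(n:ℝ)^2) heven hL
  have hLval : L = Real.pi^2/8 := by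
    have := hfull.unique hsum
    linarith
  rw [hLval] at hL
  have : (fun k : ℕ => (1:ℝ) / ((2*k+1 : ℕ):ℝ)^2)
      = (fun k : ℕ => (1:ℝ) / (2*(k:ℝ)+1)^2) := by
    funext k; push_cast; ring
  rwa [this] at hL

lemma A_bounds (c : ℝ) (hc : 0 < c) (t : ℕ → ℝ) :
    ∀ m : ℕ, (∀ i, i < 2*m → t i < t (i+1)) →
      0 < (∑ j ∈ Finset.range (2*m+1), (-1:ℝ)^j * Real.exp (c * t j)) ∧
      (∑ j ∈ Finset.range (2*m+1), (-1:ℝ)^j * Real.exp (c * t j)) ≤ Real.exp (c * t (2*m)) := by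
  intro m
  induction m with
  | zero => intro _; simp [Real.exp_pos]
  | succ m ih =>
    intro h
    obtain ⟨ih1, ih2⟩ := ih (fun i hi => h i (by omega))
    have h1 : t (2*m) < t (2*m+1) := h _ (by omega)
    have h2 : t (2*m+1) < t (2*m+2) := h _ (by omega)
    have e1 : Real.exp (c * t (2*m)) < Real.exp (c * t (2*m+1)) :=
      Real.exp_lt_exp.2 (by nlinarith)
    have e2 : Real.exp (c * t (2*m+1)) < Real.exp (c * t (2*m+2)) :=
      Real.exp_lt_exp.2 (by nlinarith)
    have hidx : 2*(m+1) = 2*m+1+1 := by ring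
    have hidx' : 2*(m+1)+1 = (2*m+1+1)+1 := by ring
    rw [hidx', hidx, Finset.sum_range_succ, Finset.sum_range_succ]
    have hs1 : ((-1:ℝ))^(2*m+1) = -1 := Odd.neg_one_pow ⟨m, by ring⟩
    have hs2 : ((-1:ℝ))^(2*m+1+1) = 1 := Even.neg_one_pow ⟨m+1, by ring⟩
    rw [hs1, hs2]
    have : (2*m+1+1) = 2*m+2 := by ring
    rw [this]
    exact ⟨by nlinarith, by nlinarith⟩

/-- The total mass for `t ≥ t_{2n}` (boundary value switched back on at `t_{2n}`):
`μ(t) = 8 ∑_{k=0}^∞ (1/((2k+1)²π²)) (1 - e^{-(2k+1)²π² t} ∑_{j=0}^{2n} (-1)^j e^{(2k+1)²π² t_j})`. -/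
noncomputable def muOn (n : ℕ) (t : ℕ → ℝ) (s : ℝ) : ℝ :=
  8 * ∑' k : ℕ, (1 / ((2 * (k : ℝ) + 1) ^ 2 * Real.pi ^ 2)) *
    (1 - Real.exp (-((2 * (k : ℝ) + 1) ^ 2 * Real.pi ^ 2) * s) *
      ∑ j ∈ Finset.range (2 * n + 1), (-1 : ℝ) ^ j *
        Real.exp (((2 * (k : ℝ) + 1) ^ 2 * Real.pi ^ 2) * t j))

/-- For switching times `0 = t₀ < t₁ < ⋯ < t_{2n}` the mass `μ` is strictly increasing on
`[t_{2n}, ∞)`, tends to `1` at infinity, and hence hits every level `M` with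
`μ(t_{2n}) < M < 1` at a unique time `t_{2n+1} > t_{2n}`. -/
theorem muOn_strictMono_tendsto_existsUnique (n : ℕ) (hn : 1 ≤ n)
    (t : ℕ → ℝ) (ht0 : t 0 = 0) (hmono : ∀ i, i < 2 * n → t i < t (i + 1)) :
    StrictMonoOn (muOn n t) (Set.Ici (t (2 * n))) ∧
    Filter.Tendsto (muOn n t) Filter.atTop (nhds 1) ∧
    ∀ M : ℝ, muOn n t (t (2 * n)) < M → M < 1 →
      ∃! s : ℝ, t (2 * n) < s ∧ muOn n t s = M := by
  set c : ℕ → ℝ := fun k => (2 * (k : ℝ) + 1) ^ 2 * Real.pi ^ 2 with hc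
  set A : ℕ → ℝ := fun k => ∑ j ∈ Finset.range (2 * n + 1), (-1 : ℝ) ^ j *
    Real.exp (c k * t j) with hAdef
  set g : ℕ → ℝ → ℝ := fun k s => (1 / c k) * (Real.exp (-(c k) * s) * A k) with hgdef
  set τ : ℝ := t (2 * n) with hτ
  have hπ : (0:ℝ) < Real.pi := Real.pi_pos
  have hcpos : ∀ k, 0 < c k := fun k => by
    have : (0:ℝ) < 2 * (k:ℝ) + 1 := by positivity
    positivity
  have hcge : ∀ k, Real.pi ^ 2 ≤ c k := fun k => by
    have h1 : (1:ℝ) ≤ (2 * (k:ℝ) + 1) ^ 2 := by nlinarith [Nat.cast_nonneg (α := ℝ) k]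
    calc Real.pi ^ 2 = 1 * Real.pi ^ 2 := by ring
      _ ≤ (2 * (k:ℝ) + 1) ^ 2 * Real.pi ^ 2 := by nlinarith
  have hA : ∀ k, 0 < A k ∧ A k ≤ Real.exp (c k * τ) := fun k =>
    A_bounds (c k) (hcpos k) t n hmono
  -- sum of 1/c k
  have hsum_invc : HasSum (fun k : ℕ => 1 / c k) (1/8) := by
    have h := hasSum_odd_sq.div_const (Real.pi ^ 2)
    have hfe : (fun k : ℕ => (1:ℝ) / (2*(k:ℝ)+1)^2 / Real.pi ^ 2) = fun k => 1 / c k := by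
      funext k; rw [div_div]
    rw [hfe] at h
    convert h using 1
    · rfl
    field_simp
  -- bounds for g
  have hgpos : ∀ k s, 0 < g k s := fun k s => by
    have := (hA k).1
    have := hcpos k
    have := Real.exp_pos (-(c k) * s)
    positivity
  have hgleE : ∀ s, τ ≤ s → ∀ k,
      g k s ≤ (1 / c k) * Real.exp (-(Real.pi ^ 2) * (s - τ)) := by
    intro s hs k
    have h1 : Real.exp (-(c k) * s) * A k ≤ Real.exp (-(Real.pi ^ 2) * (s - τ)) := by
      calc Real.exp (-(c k) * s) * A k
          ≤ Real.exp (-(c k) * s) * Real.exp (c k * τ) :=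
            mul_le_mul_of_nonneg_left (hA k).2 (Real.exp_pos _).le
        _ = Real.exp (-(c k) * (s - τ)) := by rw [← Real.exp_add]; ring_nf
        _ ≤ Real.exp (-(Real.pi ^ 2) * (s - τ)) := by
            apply Real.exp_le_exp.2
            have := hcge k
            nlinarith [sub_nonneg.2 hs]
    have h2 : (0:ℝ) ≤ 1 / c k := by positivity
    calc g k s = (1 / c k) * (Real.exp (-(c k) * s) * A k) := rfl
      _ ≤ (1 / c k) * Real.exp (-(Real.pi ^ 2) * (s - τ)) :=
          mul_le_mul_of_nonneg_left h1 h2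
  have hgle1 : ∀ s, τ ≤ s → ∀ k, g k s ≤ 1 / c k := by
    intro s hs k
    have := hgleE s hs k
    have hE : Real.exp (-(Real.pi ^ 2) * (s - τ)) ≤ 1 := by
      apply Real.exp_le_one_iff.2
      nlinarith [sub_nonneg.2 hs]
    have h2 : (0:ℝ) ≤ 1 / c k := by positivity
    nlinarith
  have hgsummable : ∀ s, τ ≤ s → Summable (fun k => g k s) := by
    intro s hs
    exact Summable.of_nonneg_of_le (fun k => (hgpos k s).le) (hgle1 s hs) hsum_invc.summable
  -- formula for muOn
  have hmu : ∀ s, τ ≤ s → muOn n t s = 1 - 8 * ∑' k, g k s := by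
    intro s hs
    have hterm : (fun k : ℕ => (1 / c k) *
        (1 - Real.exp (-(c k) * s) * A k)) = fun k => 1 / c k - g k s := by
      funext k; simp only [hgdef]; ring
    have : muOn n t s = 8 * ∑' k, (1 / c k - g k s) := by
      rw [muOn]; rw [← hterm]
    rw [this, Summable.tsum_sub hsum_invc.summable (hgsummable s hs), hsum_invc.tsum_eq]
    ring
  -- strict antitonicity of the tail sum
  have hT : ∀ s₁ ∈ Set.Ici τ, ∀ s₂ ∈ Set.Ici τ, s₁ < s₂ →
      (∑' k, g k s₂) < ∑' k, g k s₁ := by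
    intro s₁ hs₁ s₂ hs₂ hlt
    refine Summable.tsum_lt_tsum (i := 0) (fun k => ?_) ?_ (hgsummable s₂ hs₂) (hgsummable s₁ hs₁)
    · have hAk := (hA k).1
      have h2 : Real.exp (-(c k) * s₂) ≤ Real.exp (-(c k) * s₁) := by
        apply Real.exp_le_exp.2
        nlinarith [hcpos k]
      have h3 : (0:ℝ) ≤ 1 / c k := by positivity
      exact mul_le_mul_of_nonneg_left (mul_le_mul_of_nonneg_right h2 hAk.le) h3
    · have hAk := (hA 0).1
      have h2 : Real.exp (-(c 0) * s₂) < Real.exp (-(c 0) * s₁) := by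
        apply Real.exp_lt_exp.2
        nlinarith [hcpos 0]
      have h3 : (0:ℝ) < 1 / c 0 := by positivity
      exact mul_lt_mul_of_pos_left (mul_lt_mul_of_pos_right h2 hAk) h3
  have hSM : StrictMonoOn (muOn n t) (Set.Ici τ) := by
    intro s₁ hs₁ s₂ hs₂ hlt
    rw [hmu s₁ hs₁, hmu s₂ hs₂]
    have := hT s₁ hs₁ s₂ hs₂ hlt
    linarith
  -- tendsto 1
  have hEtend : Filter.Tendsto (fun s : ℝ => Real.exp (-(Real.pi ^ 2) * (s - τ)))
      Filter.atTop (nhds 0) := by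
    have h1 : Filter.Tendsto (fun s : ℝ => Real.pi ^ 2 * (s - τ)) Filter.atTop Filter.atTop := by
      apply Filter.Tendsto.const_mul_atTop (by positivity)
      exact Filter.tendsto_atTop_add_const_right _ _ Filter.tendsto_id
    have h2 : Filter.Tendsto (fun s : ℝ => -(Real.pi ^ 2 * (s - τ))) Filter.atTop Filter.atBot :=
      Filter.tendsto_neg_atTop_atBot.comp h1
    have h3 := Real.tendsto_exp_atBot.comp h2
    convert h3 using 2 with s
    simp [Function.comp, neg_mul]
  have htendlow : ∀ s, τ ≤ s →
      1 - Real.exp (-(Real.pi ^ 2) * (s - τ)) ≤ muOn n t s := by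
    intro s hs
    have hTle : (∑' k, g k s) ≤ (1/8) * Real.exp (-(Real.pi ^ 2) * (s - τ)) := by
      have hb : Summable (fun k : ℕ => (1 / c k) * Real.exp (-(Real.pi ^ 2) * (s - τ))) :=
        hsum_invc.summable.mul_right _
      have := Summable.tsum_le_tsum (hgleE s hs) (hgsummable s hs) hb
      calc (∑' k, g k s) ≤ ∑' k, (1 / c k) * Real.exp (-(Real.pi ^ 2) * (s - τ)) := this
        _ = (1/8) * Real.exp (-(Real.pi ^ 2) * (s - τ)) :=
          (hsum_invc.mul_right _).tsum_eq
    rw [hmu s hs]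
    linarith
  have htendhigh : ∀ s, τ ≤ s → muOn n t s ≤ 1 := by
    intro s hs
    rw [hmu s hs]
    have : (0:ℝ) ≤ ∑' k, g k s := tsum_nonneg (fun k => (hgpos k s).le)
    linarith
  have htend : Filter.Tendsto (muOn n t) Filter.atTop (nhds 1) := by
    have hlow : Filter.Tendsto (fun s : ℝ => 1 - Real.exp (-(Real.pi ^ 2) * (s - τ)))
        Filter.atTop (nhds 1) := by
      have := (tendsto_const_nhds (x := (1:ℝ)) (f := Filter.atTop (α := ℝ))).sub hEtend
      simpa using this
    refine tendsto_of_tendsto_of_tendsto_of_le_of_le' hlow tendsto_const_nhds ?_ ?_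
    · filter_upwards [Filter.eventually_ge_atTop τ] with s hs using htendlow s hs
    · filter_upwards [Filter.eventually_ge_atTop τ] with s hs using htendhigh s hs
  -- continuity on Ici τ
  have hcont : ContinuousOn (muOn n t) (Set.Ici τ) := by
    have hTcont : ContinuousOn (fun s => ∑' k, g k s) (Set.Ici τ) := by
      refine continuousOn_tsum (fun k => ?_) hsum_invc.summable ?_
      · apply Continuous.continuousOn
        simp only [hgdef]
        fun_prop
      · intro k x hx
        rw [Real.norm_eq_abs, abs_of_pos (hgpos k x)]
        exact hgle1 x hx k
    have : ContinuousOn (fun s => 1 - 8 * ∑' k, g k s) (Set.Ici τ) :=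
      (continuousOn_const.sub (continuousOn_const.mul hTcont))
    exact this.congr (fun s hs => hmu s hs)
  refine ⟨hSM, htend, ?_⟩
  intro M hM1 hM2
  obtain ⟨b, hbgt, hbge⟩ :=
    ((htend.eventually_const_lt hM2).and (Filter.eventually_ge_atTop τ)).exists
  have hsub : Set.Icc τ b ⊆ Set.Ici τ := fun x hx => hx.1
  have hIVT := intermediate_value_Icc hbge (hcont.mono hsub)
  obtain ⟨s, hsmem, hseq⟩ := hIVT ⟨hM1.le, hbgt.le⟩
  have hsgt : τ < s := by
    rcases eq_or_lt_of_le hsmem.1 with h | h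
    · exfalso; rw [← h] at hseq; rw [hseq] at hM1; exact lt_irrefl M hM1
    · exact h
  refine ⟨s, ⟨hsgt, hseq⟩, ?_⟩
  rintro y ⟨hy1, hy2⟩
  exact hSM.injOn (Set.mem_Ici.2 hy1.le) (Set.mem_Ici.2 hsgt.le) (by rw [hy2, hseq])
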